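/- In the game Γ(D_A, D_B) obtained from the symmetric 3×3 game (A payoffs [[5,1,1],[5,1,2],[6,2,3]], B payoffs the transpose) by subtracting D = [[2.99,-2,0],[3,-1,-3],[4,0.5,0]] from A's payoffs and D^T from B's payoffs, the unique Nash equilibrium is (x,x) with post-contract payoffs (2.01, 2.01), and the total transfer to the game miner at this equilibrium is 2·2.99 = 5.98. -/

import Mathlib

open Finset

/-- Mixed strategies over `n` pure strategies: nonnegative vectors summing to 1. -/
def mixed (n : ℕ) : Set (Fin n → ℝ) := {σ | (∀ i, 0 ≤ σ i) ∧ ∑ i, σ i = 1}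

/-- Expected payoff `σ_A^T U σ_B`. -/
def pay {m n : ℕ} (U : Fin m → Fin n → ℝ) (a : Fin m → ℝ) (b : Fin n → ℝ) : ℝ :=
  ∑ i, ∑ j, a i * U i j * b j

/-- The pure strategy `k` as a mixed strategy. -/
def pureStrat {n : ℕ} (k : Fin n) : Fin n → ℝ := fun i => if i = k then 1 else 0

/-- `b` is a best response of the column player (payoffs `UB`) to `a`. -/
def BRB {m n : ℕ} (UB : Fin m → Fin n → ℝ) (a : Fin m → ℝ) (b : Fin n → ℝ) : Prop :=
  b ∈ mixed n ∧ ∀ b' ∈ mixed n, pay UB a b' ≤ pay UB a b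

/-- `a` is a best response of the row player (payoffs `UA`) to `b`. -/
def BRA {m n : ℕ} (UA : Fin m → Fin n → ℝ) (a : Fin m → ℝ) (b : Fin n → ℝ) : Prop :=
  a ∈ mixed m ∧ ∀ a' ∈ mixed m, pay UA a' b ≤ pay UA a b

/-- Nash equilibrium of the bimatrix game `(UA, UB)`. -/
def NashEq {m n : ℕ} (UA UB : Fin m → Fin n → ℝ) (a : Fin m → ℝ) (b : Fin n → ℝ) : Prop :=
  a ∈ mixed m ∧ b ∈ mixed n ∧
  (∀ a' ∈ mixed m, pay UA a' b ≤ pay UA a b) ∧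
  (∀ b' ∈ mixed n, pay UB a b' ≤ pay UB a b)


lemma pureMem {n : ℕ} (k : Fin n) : pureStrat k ∈ mixed n := by
  refine ⟨fun i => ?_, ?_⟩
  · unfold pureStrat; split <;> norm_num
  · simp [pureStrat]

lemma half2 (a0 a1 a2 b0 b1 b2 V : ℝ) (ha0 : 0 ≤ a0) (ha1 : 0 ≤ a1) (ha2 : 0 ≤ a2)
    (hb0 : 0 ≤ b0) (hb1 : 0 ≤ b1) (hb2 : 0 ≤ b2)
    (hasum : a0 + a1 + a2 = 1) (hbsum : b0 + b1 + b2 = 1)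
    (hV : V = a0*(201/100*b0 + 3*b1 + b2) + a1*(2*b0 + 2*b1 + 5*b2) + a2*(2*b0 + 3/2*b1 + 3*b2))
    (h0 : 201/100*b0 + 3*b1 + b2 ≤ V)
    (h1 : 2*b0 + 2*b1 + 5*b2 ≤ V)
    (h2 : 2*b0 + 3/2*b1 + 3*b2 ≤ V) :
    a2 = 0 := by
  have hid : a0*(V - (201/100*b0 + 3*b1 + b2)) + a1*(V - (2*b0 + 2*b1 + 5*b2))
      + a2*(V - (2*b0 + 3/2*b1 + 3*b2)) = 0 := by
    linear_combination V * hasum + hV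
  have hgap : 1/400 ≤ V - (2*b0 + 3/2*b1 + 3*b2) := by linarith
  have t0 : 0 ≤ a0*(V - (201/100*b0 + 3*b1 + b2)) := mul_nonneg ha0 (by linarith)
  have t1 : 0 ≤ a1*(V - (2*b0 + 2*b1 + 5*b2)) := mul_nonneg ha1 (by linarith)
  have hm := mul_le_mul_of_nonneg_left hgap ha2
  nlinarith [hid, t0, t1, hm]

lemma half1 (a0 a1 a2 b0 b1 b2 V : ℝ) (ha0 : 0 ≤ a0) (ha1 : 0 ≤ a1) (ha2 : 0 ≤ a2)
    (hb0 : 0 ≤ b0) (hb1 : 0 ≤ b1) (hb2 : 0 ≤ b2)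
    (hasum : a0 + a1 + a2 = 1) (hbsum : b0 + b1 + b2 = 1) (hb2z : b2 = 0)
    (hV : V = a0*(201/100*b0 + 3*b1 + b2) + a1*(2*b0 + 2*b1 + 5*b2) + a2*(2*b0 + 3/2*b1 + 3*b2))
    (h0 : 201/100*b0 + 3*b1 + b2 ≤ V)
    (h1 : 2*b0 + 2*b1 + 5*b2 ≤ V)
    (h2 : 2*b0 + 3/2*b1 + 3*b2 ≤ V) :
    a1 = 0 := by
  have hid : a0*(V - (201/100*b0 + 3*b1 + b2)) + a1*(V - (2*b0 + 2*b1 + 5*b2))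
      + a2*(V - (2*b0 + 3/2*b1 + 3*b2)) = 0 := by
    linear_combination V * hasum + hV
  have hgap : 1/100 ≤ V - (2*b0 + 2*b1 + 5*b2) := by linarith
  have t0 : 0 ≤ a0*(V - (201/100*b0 + 3*b1 + b2)) := mul_nonneg ha0 (by linarith)
  have t2 : 0 ≤ a2*(V - (2*b0 + 3/2*b1 + 3*b2)) := mul_nonneg ha2 (by linarith)
  have hm := mul_le_mul_of_nonneg_left hgap ha1
  nlinarith [hid, t0, t2, hm]

set_option maxHeartbeats 1000000 in
/-- In `Γ(D_A, D_B)` from the "G makes offers" example: subtracting `D_A` from A's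
payoffs and `D_A^T` from B's payoffs (`B`'s original payoffs being the transpose of A's),
the unique Nash equilibrium is `(x,x)` with post-contract payoffs `(2.01, 2.01)`, and the
total transfer to the miner at that outcome is `5.98`. -/
theorem stmt_14 :
    let UA : Fin 3 → Fin 3 → ℝ := ![![5, 1, 1], ![5, 1, 2], ![6, 2, 3]]
    let DA : Fin 3 → Fin 3 → ℝ := ![![299/100, -2, 0], ![3, -1, -3], ![4, 1/2, 0]]
    let UB : Fin 3 → Fin 3 → ℝ := fun i j => UA j i
    let DB : Fin 3 → Fin 3 → ℝ := fun i j => DA j i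
    NashEq (UA - DA) (UB - DB) (pureStrat 0) (pureStrat 0) ∧
    (∀ (a : Fin 3 → ℝ) (b : Fin 3 → ℝ), NashEq (UA - DA) (UB - DB) a b →
      a = pureStrat 0 ∧ b = pureStrat 0) ∧
    pay (UA - DA) (pureStrat 0) (pureStrat 0) = 201/100 ∧
    pay (UB - DB) (pureStrat 0) (pureStrat 0) = 201/100 ∧
    pay (DA + DB) (pureStrat 0) (pureStrat 0) = 598/100 := by

  intro UA DA UB DB
  refine ⟨⟨pureMem 0, pureMem 0, ?_, ?_⟩, ?_, ?_, ?_, ?_⟩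
  · rintro a' ⟨hpos, hsum⟩
    rw [Fin.sum_univ_three] at hsum
    simp only [pay, Fin.sum_univ_three, Pi.sub_apply, UA, DA, pureStrat,
      Matrix.cons_val_zero, Matrix.cons_val_one, Matrix.head_cons,
      Matrix.cons_val_two, Matrix.tail_cons]
    norm_num [Fin.ext_iff]
    linarith [hpos 0, hpos 1, hpos 2]
  · rintro b' ⟨hpos, hsum⟩
    rw [Fin.sum_univ_three] at hsum
    simp only [pay, Fin.sum_univ_three, Pi.sub_apply, UA, DA, UB, DB, pureStrat,
      Matrix.cons_val_zero, Matrix.cons_val_one, Matrix.head_cons,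
      Matrix.cons_val_two, Matrix.tail_cons]
    norm_num [Fin.ext_iff]
    linarith [hpos 0, hpos 1, hpos 2]
  · rintro a b ⟨⟨hap, has⟩, ⟨hbp, hbs⟩, hA, hB⟩
    rw [Fin.sum_univ_three] at has hbs
    have h0 := hA (pureStrat 0) (pureMem 0)
    have h1 := hA (pureStrat 1) (pureMem 1)
    have h2 := hA (pureStrat 2) (pureMem 2)
    have g0 := hB (pureStrat 0) (pureMem 0)
    have g1 := hB (pureStrat 1) (pureMem 1)
    have g2 := hB (pureStrat 2) (pureMem 2)
    simp only [pay, Fin.sum_univ_three, Pi.sub_apply, UA, DA, UB, DB, pureStrat,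
      Matrix.cons_val_zero, Matrix.cons_val_one, Matrix.head_cons,
      Matrix.cons_val_two, Matrix.tail_cons] at h0 h1 h2 g0 g1 g2
    norm_num [Fin.ext_iff] at h0 h1 h2 g0 g1 g2
    have ha2 : a 2 = 0 :=
      half2 (a 0) (a 1) (a 2) (b 0) (b 1) (b 2) _ (hap 0) (hap 1) (hap 2)
        (hbp 0) (hbp 1) (hbp 2) has hbs rfl (by linarith) (by linarith) (by linarith)
    have hb2 : b 2 = 0 :=
      half2 (b 0) (b 1) (b 2) (a 0) (a 1) (a 2) _ (hbp 0) (hbp 1) (hbp 2)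
        (hap 0) (hap 1) (hap 2) hbs has rfl (by linarith) (by linarith) (by linarith)
    have ha1 : a 1 = 0 :=
      half1 (a 0) (a 1) (a 2) (b 0) (b 1) (b 2) _ (hap 0) (hap 1) (hap 2)
        (hbp 0) (hbp 1) (hbp 2) has hbs hb2 rfl (by linarith) (by linarith) (by linarith)
    have hb1 : b 1 = 0 :=
      half1 (b 0) (b 1) (b 2) (a 0) (a 1) (a 2) _ (hbp 0) (hbp 1) (hbp 2)
        (hap 0) (hap 1) (hap 2) hbs has ha2 rfl (by linarith) (by linarith) (by linarith)
    have ha0 : a 0 = 1 := by linarith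
    have hb0 : b 0 = 1 := by linarith
    constructor <;> funext i <;> fin_cases i <;>
      simp_all [pureStrat, Fin.ext_iff]
  · norm_num [pay, Fin.sum_univ_three, Pi.sub_apply, UA, DA, pureStrat]
  · norm_num [pay, Fin.sum_univ_three, Pi.sub_apply, UA, DA, UB, DB, pureStrat]
  · norm_num [pay, Fin.sum_univ_three, Pi.add_apply, UA, DA, DB, pureStrat]
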